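/- arXiv:1412.0122 — 3 statements merged into one kernel-verified Lean document; each statement's English description precedes it below -/
import Mathlib

section
/- For n ≥ 5, the number of roots in the triple root system R(Hₙ) equals (n³ - n)/3. -/
open Finset

/-- Adjacency of the triple diagram `Hₙ`: vertices `E₀,…,E_{n-1}` (indexed by
naturals `< n`), with the chain `E₁—E₂—⋯—E_{n-1}` and the weight-3 vertex `E₀`
attached to `E₃`. -/
def HAdj (i j : ℕ) : Bool :=
  decide ((i = 0 ∧ j = 3) ∨ (j = 0 ∧ i = 3) ∨ (1 ≤ i ∧ i + 1 = j) ∨ (1 ≤ j ∧ j + 1 = i))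

/-- Intersection matrix of `Hₙ`: `-3` at `E₀`, `-2` at the other vertices, `1` for
adjacent pairs, `0` otherwise. -/
def HM (i j : ℕ) : ℤ :=
  if i = j then (if i = 0 then -3 else -2) else if HAdj i j then 1 else 0

/-- Self-intersection of a divisor supported on the vertices of `Hₙ`. -/
def HQ (n : ℕ) (Y : ℕ → ℤ) : ℤ :=
  ∑ i ∈ Finset.range n, ∑ j ∈ Finset.range n, Y i * HM i j * Y j

/-- The triple root system of `Hₙ`. -/
def HRoots (n : ℕ) : Set (ℕ → ℤ) :=
  {Y : ℕ → ℤ | (∀ i, n ≤ i → Y i = 0) ∧ Y ≠ 0 ∧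
    ((∀ i, 0 ≤ Y i) ∨ (∀ i, Y i ≤ 0)) ∧ (HQ n Y = -2 ∨ HQ n Y = -3)}

/-- value of `Y` with the special vertex `0` zeroed out -/
def Yp (Y : ℕ → ℤ) (j : ℕ) : ℤ := if j = 0 then 0 else Y j

/-- step sequence of the chain part -/
def sstep (Y : ℕ → ℤ) (i : ℕ) : ℤ := Y (i+1) - Yp Y i

lemma HM_right (n i : ℕ) (hn : 5 ≤ n) (hi : i < n) (h : i ≠ n - 1) : HM i n = 0 := by
  unfold HM HAdj
  have h1 : i ≠ n := by omega
  simp only [h1, if_false]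
  have : ¬((i = 0 ∧ n = 3) ∨ (n = 0 ∧ i = 3) ∨ (1 ≤ i ∧ i + 1 = n) ∨ (1 ≤ n ∧ n + 1 = i)) := by omega
  simp [this]

lemma HM_left (n j : ℕ) (hn : 5 ≤ n) (hj : j < n) (h : j ≠ n - 1) : HM n j = 0 := by
  unfold HM HAdj
  have h1 : n ≠ j := by omega
  simp only [h1, if_false]
  have : ¬((n = 0 ∧ j = 3) ∨ (j = 0 ∧ n = 3) ∨ (1 ≤ n ∧ n + 1 = j) ∨ (1 ≤ j ∧ j + 1 = n)) := by omega
  simp [this]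

lemma HM_adj (n : ℕ) (hn : 5 ≤ n) : HM (n-1) n = 1 ∧ HM n (n-1) = 1 := by
  unfold HM HAdj
  have h1 : n - 1 ≠ n := by omega
  have h2 : n ≠ n - 1 := by omega
  have h3 : (1 ≤ n - 1 ∧ n - 1 + 1 = n) := by omega
  simp [h1, h2, h3]

lemma HM_diag (n : ℕ) (hn : 5 ≤ n) : HM n n = -2 := by
  unfold HM
  have : n ≠ 0 := by omega
  simp [this]

/-- boundary version of the sum-of-squares identity -/
lemma hq_id (n : ℕ) (hn : 5 ≤ n) (Y : ℕ → ℤ) :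
    HQ n Y = 2 * Y 0 * Y 3 - 3 * (Y 0)^2
      - (∑ i ∈ Finset.range (n-1), (sstep Y i)^2) - (Y (n-1))^2 := by
  induction n, hn using Nat.le_induction with
  | base =>
    show HQ 5 Y = _
    unfold HQ
    simp only [Finset.sum_range_succ, Finset.sum_range_zero, show (5:ℕ)-1 = 4 from rfl]
    norm_num [HM, HAdj, sstep, Yp]
    ring
  | succ n hn ih =>
    have hQs : HQ (n+1) Y = HQ n Y + (∑ i ∈ Finset.range n, Y i * HM i n * Y n)
        + ∑ j ∈ Finset.range (n+1), Y n * HM n j * Y j := by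
      unfold HQ
      rw [Finset.sum_range_succ]
      congr 1
      rw [← Finset.sum_add_distrib]
      apply Finset.sum_congr rfl
      intro i _
      rw [Finset.sum_range_succ]
    have h1 : (∑ i ∈ Finset.range n, Y i * HM i n * Y n) = Y (n-1) * Y n := by
      rw [Finset.sum_eq_single (n-1)]
      · rw [(HM_adj n hn).1]; ring
      · intro b hb hbne
        rw [HM_right n b hn (Finset.mem_range.mp hb) hbne]; ring
      · intro h; exact absurd (Finset.mem_range.mpr (by omega)) h
    have h2 : (∑ j ∈ Finset.range (n+1), Y n * HM n j * Y j)
        = Y n * Y (n-1) + Y n * (-2) * Y n := by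
      rw [Finset.sum_range_succ, HM_diag n hn]
      have h2' : ∑ j ∈ Finset.range n, Y n * HM n j * Y j = Y n * Y (n-1) := by
        rw [Finset.sum_eq_single (n-1)]
        · rw [(HM_adj n hn).2]; ring
        · intro b hb hbne
          rw [HM_left n b hn (Finset.mem_range.mp hb) hbne]; ring
        · intro h; exact absurd (Finset.mem_range.mpr (by omega)) h
      rw [h2']
    have h3 : (∑ i ∈ Finset.range ((n+1)-1), (sstep Y i)^2)
        = (∑ i ∈ Finset.range (n-1), (sstep Y i)^2) + (sstep Y (n-1))^2 := by
      have : (n+1)-1 = (n-1)+1 := by omega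
      rw [this, Finset.sum_range_succ]
    have h4 : sstep Y (n-1) = Y n - Y (n-1) := by
      unfold sstep Yp
      have e1 : n - 1 + 1 = n := by omega
      have e2 : n - 1 ≠ 0 := by omega
      rw [e1]; simp [e2]
    have h5 : (n+1)-1 = n := by omega
    rw [hQs, h1, h2, h3, h4, h5, ih]
    ring

lemma tel (Y : ℕ → ℤ) : ∀ j, Yp Y j = ∑ i ∈ Finset.range j, sstep Y i := by
  intro j
  induction j with
  | zero => simp [Yp]
  | succ j ih =>
    rw [Finset.sum_range_succ, ← ih]
    unfold Yp sstep
    simp [Yp]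

def cnt (U : Finset ℕ) (j : ℕ) : ℤ := ((U.filter (· < j)).card : ℤ)

lemma cnt_succ (U : Finset ℕ) (j : ℕ) :
    cnt U (j+1) = cnt U j + (if j ∈ U then 1 else 0) := by
  unfold cnt
  have h1 : U.filter (· < j+1) = U.filter (fun x => x < j ∨ x = j) := by
    apply Finset.filter_congr; intro x _; constructor <;> (intro h; omega)
  rw [h1, Finset.filter_or, Finset.filter_eq' U j]
  rw [Finset.card_union_of_disjoint]
  · push_cast
    congr 1
    split
    · simp
    · simp
  · simp only [Finset.disjoint_left, Finset.mem_filter]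
    rintro a ⟨-, ha⟩
    split
    · simp only [Finset.mem_singleton]; omega
    · simp

lemma cnt_zero (U : Finset ℕ) : cnt U 0 = 0 := by simp [cnt]

lemma cnt_full (U : Finset ℕ) (j : ℕ) (h : ∀ x ∈ U, x < j) : cnt U j = U.card := by
  unfold cnt
  rw [Finset.filter_true_of_mem h]

lemma cnt_empty (U : Finset ℕ) (j : ℕ) (h : ∀ x ∈ U, j ≤ x) : cnt U j = 0 := by
  unfold cnt
  rw [Finset.filter_false_of_mem]
  · simp
  · intro x hx; exact Nat.not_lt.mpr (h x hx)

lemma cnt_mono (U : Finset ℕ) {j k : ℕ} (h : j ≤ k) : cnt U j ≤ cnt U k := by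
  unfold cnt
  have hsub : U.filter (· < j) ⊆ U.filter (· < k) := by
    intro x hx
    simp only [Finset.mem_filter] at hx ⊢
    exact ⟨hx.1, lt_of_lt_of_le hx.2 h⟩
  exact_mod_cast Finset.card_le_card hsub

lemma cnt_le_card (U : Finset ℕ) (j : ℕ) : cnt U j ≤ U.card := by
  unfold cnt
  exact_mod_cast Finset.card_le_card (Finset.filter_subset _ U)

lemma cnt_nonneg (U : Finset ℕ) (j : ℕ) : 0 ≤ cnt U j := Int.ofNat_nonneg _

/-- sum-of-squares identity for supported divisors -/
lemma hq_id' (n : ℕ) (hn : 5 ≤ n) (Y : ℕ → ℤ) (hsupp : ∀ i, n ≤ i → Y i = 0) :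
    HQ n Y = 2 * Y 0 * Y 3 - 3 * (Y 0)^2 - (∑ i ∈ Finset.range n, (sstep Y i)^2) := by
  rw [hq_id n hn Y]
  have h1 : (∑ i ∈ Finset.range n, (sstep Y i)^2)
      = (∑ i ∈ Finset.range (n-1), (sstep Y i)^2) + (sstep Y (n-1))^2 := by
    have e : n = (n-1)+1 := by omega
    rw [e, Finset.sum_range_succ]
    simp only [← e]
  have h2 : sstep Y (n-1) = - Y (n-1) := by
    unfold sstep Yp
    have e1 : n - 1 + 1 = n := by omega
    have e2 : n - 1 ≠ 0 := by omega
    rw [e1, hsupp n le_rfl]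
    simp [e2]
  rw [h1, h2]
  ring

def rootA (a b : ℕ) : ℕ → ℤ := fun j => if a ≤ j ∧ j ≤ b then 1 else 0

lemma rootA_step (a b : ℕ) (ha : 1 ≤ a) (hab : a ≤ b) (i : ℕ) :
    sstep (rootA a b) i = (if i+1 = a then 1 else 0) - (if i = b then 1 else 0) := by
  unfold sstep Yp rootA
  split_ifs <;> omega

lemma sum_ind (n c : ℕ) (hc : c < n) :
    (∑ i ∈ Finset.range n, (if i = c then (1:ℤ) else 0)) = 1 := by
  rw [Finset.sum_ite_eq' (Finset.range n) c (fun _ => (1:ℤ))]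
  simp [Finset.mem_range.mpr hc]

lemma rootA_hq (n a b : ℕ) (hn : 5 ≤ n) (ha : 1 ≤ a) (hab : a ≤ b) (hb : b ≤ n-1) :
    HQ n (rootA a b) = -2 := by
  have hsupp : ∀ i, n ≤ i → rootA a b i = 0 := by
    intro i hi; unfold rootA; have : ¬(a ≤ i ∧ i ≤ b) := by omega
    simp [this]
  rw [hq_id' n hn _ hsupp]
  have h0 : rootA a b 0 = 0 := by
    unfold rootA
    rw [if_neg (by omega : ¬(a ≤ 0 ∧ 0 ≤ b))]
  have hsum : (∑ i ∈ Finset.range n, (sstep (rootA a b) i)^2) = 2 := by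
    have hpt : ∀ i ∈ Finset.range n, (sstep (rootA a b) i)^2
        = (if i = a-1 then (1:ℤ) else 0) + (if i = b then (1:ℤ) else 0) := by
      intro i _
      rw [rootA_step a b ha hab i]
      have e : (i + 1 = a) ↔ (i = a - 1) := by omega
      simp only [e]
      split_ifs with h1 h2 h2
      · omega
      · norm_num
      · norm_num
      · norm_num
    rw [Finset.sum_congr rfl hpt, Finset.sum_add_distrib,
      sum_ind n (a-1) (by omega), sum_ind n b (by omega)]
    norm_num
  rw [h0, hsum]; ring

lemma rootA_mem (n a b : ℕ) (hn : 5 ≤ n) (ha : 1 ≤ a) (hab : a ≤ b) (hb : b ≤ n-1) :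
    rootA a b ∈ HRoots n := by
  refine ⟨?_, ?_, Or.inl ?_, Or.inl ?_⟩
  · intro i hi; unfold rootA; have : ¬(a ≤ i ∧ i ≤ b) := by omega
    simp [this]
  · intro h
    have := congrFun h a
    unfold rootA at this
    simp [hab] at this
  · intro i; unfold rootA; split_ifs <;> norm_num
  · exact rootA_hq n a b hn ha hab hb

def rootB (S T : Finset ℕ) : ℕ → ℤ := fun j => if j = 0 then 1 else cnt S (j+1) - cnt T j

lemma sum_chi (U : Finset ℕ) (m : ℕ) :
    (∑ i ∈ Finset.range m, (if i ∈ U then (1:ℤ) else 0)) = cnt U m := by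
  induction m with
  | zero => simp [cnt_zero]
  | succ m ih => rw [Finset.sum_range_succ, ih, cnt_succ]

section rootB
variable {S T : Finset ℕ} {n : ℕ}

lemma S_lt (hS : S ⊆ ({1,2,3} : Finset ℕ)) : ∀ x ∈ S, 1 ≤ x ∧ x ≤ 3 := by
  intro x hx
  have := hS hx
  simp only [Finset.mem_insert, Finset.mem_singleton] at this
  omega

lemma rootB_Yp (hS : S ⊆ ({1,2,3} : Finset ℕ)) (j : ℕ) :
    Yp (rootB S T) j = cnt S (j+1) - cnt T j := by
  unfold Yp rootB
  rcases eq_or_ne j 0 with rfl | hj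
  · rw [if_pos rfl, cnt_zero, cnt_empty S 1 (fun x hx => (S_lt hS x hx).1)]
    norm_num
  · rw [if_neg hj, if_neg hj]

lemma rootB_step (hS : S ⊆ ({1,2,3} : Finset ℕ)) (i : ℕ) :
    sstep (rootB S T) i = (if i+1 ∈ S then 1 else 0) - (if i ∈ T then 1 else 0) := by
  have h1 : rootB S T (i+1) = Yp (rootB S T) (i+1) := by unfold Yp; rw [if_neg (by omega)]
  unfold sstep
  rw [h1, rootB_Yp hS, rootB_Yp hS, cnt_succ S (i+1), cnt_succ T i]
  ring

lemma rootB_supp (hS : S ⊆ ({1,2,3} : Finset ℕ)) (hT : T ⊆ Finset.Ico 3 n)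
    (hST : S.card = T.card) (hn : 5 ≤ n) : ∀ j, n ≤ j → rootB S T j = 0 := by
  intro j hj
  unfold rootB
  rw [if_neg (by omega)]
  rw [cnt_full S (j+1) (fun x hx => by have := (S_lt hS x hx).2; omega),
    cnt_full T j (fun x hx => by have := Finset.mem_Ico.mp (hT hx); omega)]
  rw [hST]; ring

lemma rootB_nonneg (hS : S ⊆ ({1,2,3} : Finset ℕ)) (hT : T ⊆ Finset.Ico 3 n)
    (hST : S.card = T.card) : ∀ j, 0 ≤ rootB S T j := by
  intro j
  unfold rootB
  rcases eq_or_ne j 0 with rfl | hj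
  · norm_num
  · rw [if_neg hj]
    rcases le_or_gt j 3 with h | h
    · rw [cnt_empty T j (fun x hx => by have := Finset.mem_Ico.mp (hT hx); omega)]
      have := cnt_nonneg S (j+1)
      omega
    · rw [cnt_full S (j+1) (fun x hx => by have := (S_lt hS x hx).2; omega)]
      have h1 := cnt_le_card T j
      rw [← hST] at h1
      omega

lemma rootB_hq (hS : S ⊆ ({1,2,3} : Finset ℕ)) (hT : T ⊆ Finset.Ico 3 n)
    (hST : S.card = T.card) (hn : 5 ≤ n) : HQ n (rootB S T) = -3 := by
  rw [hq_id' n hn _ (rootB_supp hS hT hST hn)]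
  have h0 : rootB S T 0 = 1 := by unfold rootB; rw [if_pos rfl]
  have h3 : rootB S T 3 = S.card := by
    unfold rootB
    rw [if_neg (by omega), cnt_full S 4 (fun x hx => by have := (S_lt hS x hx).2; omega),
      cnt_empty T 3 (fun x hx => by have := Finset.mem_Ico.mp (hT hx); omega)]
    ring
  have hsum : (∑ i ∈ Finset.range n, (sstep (rootB S T) i)^2)
      = (S.card : ℤ) + (T.card : ℤ) := by
    have hpt : ∀ i ∈ Finset.range n, (sstep (rootB S T) i)^2
        = (if i+1 ∈ S then (1:ℤ) else 0) + (if i ∈ T then (1:ℤ) else 0) := by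
      intro i _
      rw [rootB_step hS i]
      have hnb : ¬(i+1 ∈ S ∧ i ∈ T) := by
        rintro ⟨h1, h2⟩
        have := (S_lt hS _ h1).2
        have := Finset.mem_Ico.mp (hT h2)
        omega
      split_ifs with a1 a2 a2 <;> [exact absurd ⟨a1,a2⟩ hnb; norm_num; norm_num; norm_num]
    rw [Finset.sum_congr rfl hpt, Finset.sum_add_distrib]
    congr 1
    · have : (∑ i ∈ Finset.range n, (if i+1 ∈ S then (1:ℤ) else 0))
          = ∑ i ∈ Finset.range (n+1), (if i ∈ S then (1:ℤ) else 0) := by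
        rw [Finset.sum_range_succ' (fun i => if i ∈ S then (1:ℤ) else 0) n]
        have : 0 ∉ S := fun h => by have := (S_lt hS 0 h).1; omega
        simp [this]
      rw [this, sum_chi, cnt_full S (n+1) (fun x hx => by have := (S_lt hS x hx).2; omega)]
    · rw [sum_chi, cnt_full T n (fun x hx => by have := Finset.mem_Ico.mp (hT hx); omega)]
  rw [h0, h3, hsum, hST]
  push_cast
  ring

lemma rootB_mem (hS : S ⊆ ({1,2,3} : Finset ℕ)) (hT : T ⊆ Finset.Ico 3 n)
    (hST : S.card = T.card) (hn : 5 ≤ n) : rootB S T ∈ HRoots n := by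
  refine ⟨rootB_supp hS hT hST hn, ?_, Or.inl (rootB_nonneg hS hT hST), Or.inr (rootB_hq hS hT hST hn)⟩
  intro h
  have := congrFun h 0
  unfold rootB at this
  simp at this
end rootB

lemma int_self_le_sq (x : ℤ) : x ≤ x^2 := by
  rcases le_or_gt x 0 with h | h
  · exact le_trans h (sq_nonneg x)
  · nlinarith

lemma int_even_sq_sub (x : ℤ) : Even (x^2 - x) := by
  have : x^2 - x = (x-1) * ((x-1)+1) := by ring
  rw [this]
  exact Int.even_mul_succ_self (x-1)

lemma int_even_sq_add (x : ℤ) : Even (x^2 + x) := by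
  have : x^2 + x = x * (x+1) := by ring
  rw [this]
  exact Int.even_mul_succ_self x

section classify
variable {n : ℕ} {Y : ℕ → ℤ}

lemma tel' (hn : 5 ≤ n) (hsupp : ∀ i, n ≤ i → Y i = 0) :
    ∑ i ∈ Finset.range n, sstep Y i = 0 := by
  have h := tel Y n
  unfold Yp at h
  rw [if_neg (by omega), hsupp n le_rfl] at h
  omega

lemma telY3 (hn : 5 ≤ n) : Y 3 = sstep Y 0 + sstep Y 1 + sstep Y 2 := by
  have h := tel Y 3
  unfold Yp at h
  rw [if_neg (by omega)] at h
  rw [h]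
  simp [Finset.sum_range_succ]

lemma split3 (hn : 5 ≤ n) (f : ℕ → ℤ) :
    ∑ i ∈ Finset.range n, f i
      = (f 0 + f 1 + f 2) + ∑ i ∈ Finset.Ico 3 n, f i := by
  rw [Finset.range_eq_Ico, ← Finset.sum_Ico_consecutive f (by omega : 0 ≤ 3) (by omega : 3 ≤ n)]
  congr 1
  rw [← Finset.range_eq_Ico]
  simp [Finset.sum_range_succ]

lemma telY3' (hn : 5 ≤ n) (hsupp : ∀ i, n ≤ i → Y i = 0) :
    Y 3 = - ∑ i ∈ Finset.Ico 3 n, sstep Y i := by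
  have h1 := tel' hn hsupp
  rw [split3 hn (sstep Y)] at h1
  have h2 := telY3 (Y := Y) hn
  omega

lemma sstep_supp (hn : 5 ≤ n) (hsupp : ∀ i, n ≤ i → Y i = 0) {i : ℕ} (hi : n ≤ i) :
    sstep Y i = 0 := by
  unfold sstep Yp
  rw [if_neg (by omega), hsupp i hi, hsupp (i+1) (by omega)]
  ring
end classify

lemma int_one_le_sq {x : ℤ} (h : x ≠ 0) : 1 ≤ x^2 := by
  rcases h.lt_or_gt with h | h <;> nlinarith

lemma buildA {n : ℕ} {Y : ℕ → ℤ} (hn : 5 ≤ n) (a b : ℕ) (hab : a < b) (hb : b < n)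
    (hs0 : ∀ i, i ≠ a → i ≠ b → sstep Y i = 0)
    (hsa : sstep Y a = 1) (hsb : sstep Y b = -1) (hY0 : Y 0 = 0) :
    Y = rootA (a+1) b := by
  funext j
  rcases eq_or_ne j 0 with rfl | hj
  · rw [hY0]
    unfold rootA
    rw [if_neg (by omega)]
  · have hYj : Y j = ∑ i ∈ Finset.range j, sstep Y i := by
      have := tel Y j
      unfold Yp at this
      rwa [if_neg hj] at this
    have hpt : ∀ i ∈ Finset.range j, sstep Y i
        = (if i = a then (1:ℤ) else 0) + (if i = b then (-1:ℤ) else 0) := by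
      intro i _
      rcases eq_or_ne i a with rfl | hia
      · rw [hsa, if_pos rfl, if_neg (by omega)]; ring
      · rcases eq_or_ne i b with rfl | hib
        · rw [hsb, if_neg hia, if_pos rfl]; ring
        · rw [hs0 i hia hib, if_neg hia, if_neg hib]; ring
    rw [hYj, Finset.sum_congr rfl hpt, Finset.sum_add_distrib,
      Finset.sum_ite_eq' (Finset.range j) a (fun _ => (1:ℤ)),
      Finset.sum_ite_eq' (Finset.range j) b (fun _ => (-1:ℤ))]
    unfold rootA
    simp only [Finset.mem_range]
    split_ifs <;> omega

lemma ite_eq_one {x : ℤ} (h : x = 0 ∨ x = 1) : (if x = 1 then (1:ℤ) else 0) = x := by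
  rcases h with rfl | rfl <;> norm_num

lemma buildB {n : ℕ} {Y : ℕ → ℤ} (hn : 5 ≤ n) (hsupp : ∀ i, n ≤ i → Y i = 0)
    (hY0 : Y 0 = 1)
    (hleft : ∀ i, i < 3 → sstep Y i = 0 ∨ sstep Y i = 1)
    (hright : ∀ i ∈ Finset.Ico 3 n, sstep Y i = 0 ∨ sstep Y i = -1) :
    ∃ S T, S ⊆ ({1,2,3} : Finset ℕ) ∧ T ⊆ Finset.Ico 3 n ∧ S.card = T.card ∧
      Y = rootB S T := by
  set S := ({1,2,3} : Finset ℕ).filter (fun i => sstep Y (i-1) = 1) with hSdef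
  set Tf := (Finset.Ico 3 n).filter (fun i => sstep Y i = -1) with hTdef
  have hS : S ⊆ ({1,2,3} : Finset ℕ) := Finset.filter_subset _ _
  have hT : Tf ⊆ Finset.Ico 3 n := Finset.filter_subset _ _
  have hSmem : ∀ j, (j+1 ∈ S ↔ (j < 3 ∧ sstep Y j = 1)) := by
    intro j
    rw [hSdef, Finset.mem_filter]
    simp only [Finset.mem_insert, Finset.mem_singleton, Nat.add_sub_cancel]
    constructor
    · rintro ⟨h1, h2⟩; exact ⟨by omega, h2⟩
    · rintro ⟨h1, h2⟩; exact ⟨by omega, h2⟩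
  have hTmem : ∀ j, (j ∈ Tf ↔ (3 ≤ j ∧ j < n ∧ sstep Y j = -1)) := by
    intro j
    rw [hTdef, Finset.mem_filter, Finset.mem_Ico]
    tauto
  have hstep_eq : ∀ j, sstep Y j
      = (if j+1 ∈ S then (1:ℤ) else 0) - (if j ∈ Tf then 1 else 0) := by
    intro j
    rcases lt_or_ge j 3 with h3 | h3
    · have hnT : j ∉ Tf := fun hmem => by rw [hTmem] at hmem; omega
      rcases hleft j h3 with h | h
      · have hnS : j+1 ∉ S := fun hmem => by rw [hSmem] at hmem; omega
        rw [if_neg hnS, if_neg hnT, h]; norm_num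
      · rw [if_pos ((hSmem j).mpr ⟨h3, h⟩), if_neg hnT, h]; norm_num
    · have hnS : j+1 ∉ S := fun hmem => by rw [hSmem] at hmem; omega
      rcases lt_or_ge j n with hjn | hjn
      · rcases hright j (Finset.mem_Ico.mpr ⟨h3, hjn⟩) with h | h
        · have hnT : j ∉ Tf := fun hmem => by rw [hTmem] at hmem; omega
          rw [if_neg hnS, if_neg hnT, h]; norm_num
        · rw [if_neg hnS, if_pos ((hTmem j).mpr ⟨h3, hjn, h⟩), h]; norm_num
      · have hnT : j ∉ Tf := fun hmem => by rw [hTmem] at hmem; omega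
        rw [if_neg hnS, if_neg hnT, sstep_supp hn hsupp hjn]
        norm_num
  have hYp : ∀ j, Yp Y j = Yp (rootB S Tf) j := by
    intro j
    induction j with
    | zero => simp [Yp]
    | succ j ih =>
      have e1 : Yp Y (j+1) = Yp Y j + sstep Y j := by
        have h : Yp Y (j+1) = Y (j+1) := by unfold Yp; rw [if_neg (by omega : ¬ j+1 = 0)]
        rw [h, show sstep Y j = Y (j+1) - Yp Y j from rfl]; ring
      have e2 : Yp (rootB S Tf) (j+1) = Yp (rootB S Tf) j + sstep (rootB S Tf) j := by
        have h : Yp (rootB S Tf) (j+1) = rootB S Tf (j+1) := by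
          unfold Yp; rw [if_neg (by omega : ¬ j+1 = 0)]
        rw [h, show sstep (rootB S Tf) j = rootB S Tf (j+1) - Yp (rootB S Tf) j from rfl]
        ring
      rw [e1, e2, ih, rootB_step hS, hstep_eq j]
  have hYeq : Y = rootB S Tf := by
    funext j
    rcases eq_or_ne j 0 with rfl | hj
    · rw [hY0]; unfold rootB; rw [if_pos rfl]
    · have h1 := hYp j
      unfold Yp at h1
      rw [if_neg hj, if_neg hj] at h1
      exact h1
  have hY3a : Y 3 = sstep Y 0 + sstep Y 1 + sstep Y 2 := telY3 hn
  have hY3b : Y 3 = - ∑ i ∈ Finset.Ico 3 n, sstep Y i := telY3' hn hsupp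
  have hScard : (S.card : ℤ) = Y 3 := by
    rw [hSdef, Finset.card_filter]
    rw [show ({1,2,3} : Finset ℕ) = insert 1 (insert 2 {3}) from rfl]
    rw [Finset.sum_insert (by decide), Finset.sum_insert (by decide), Finset.sum_singleton]
    push_cast
    rw [ite_eq_one (hleft 0 (by omega)), ite_eq_one (hleft 1 (by omega)),
      ite_eq_one (hleft 2 (by omega))]
    linarith [hY3a]
  have hTcard : (Tf.card : ℤ) = Y 3 := by
    rw [hTdef, Finset.card_filter]
    push_cast
    have hpt : ∀ i ∈ Finset.Ico 3 n, (if sstep Y i = -1 then (1:ℤ) else 0) = - sstep Y i := by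
      intro i hi
      rcases hright i hi with h | h <;> rw [h] <;> norm_num
    rw [Finset.sum_congr rfl hpt, Finset.sum_neg_distrib]
    linarith [hY3b]
  exact ⟨S, Tf, hS, hT, by have := hScard.trans hTcard.symm; exact_mod_cast this, hYeq⟩

set_option maxHeartbeats 1000000 in
lemma classify (n : ℕ) (hn : 5 ≤ n) (Y : ℕ → ℤ) (hY : Y ∈ HRoots n) (hpos : ∀ i, 0 ≤ Y i) :
    (∃ a b, 1 ≤ a ∧ a ≤ b ∧ b ≤ n-1 ∧ Y = rootA a b) ∨
    (∃ S T, S ⊆ ({1,2,3} : Finset ℕ) ∧ T ⊆ Finset.Ico 3 n ∧ S.card = T.card ∧ Y = rootB S T) := by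
  obtain ⟨hsupp, hne, -, hq⟩ := hY
  set s : ℕ → ℤ := sstep Y with hs
  have hid := hq_id' n hn Y hsupp
  have hsplit := split3 hn (fun i => (s i)^2)
  set L : ℤ := (s 0)^2 + (s 1)^2 + (s 2)^2 with hL
  set R : ℤ := ∑ i ∈ Finset.Ico 3 n, (s i)^2 with hR
  have hid2 : HQ n Y = 2 * Y 0 * Y 3 - 3 * (Y 0)^2 - L - R := by
    rw [hid, hsplit]; ring
  have hY3a : Y 3 = s 0 + s 1 + s 2 := telY3 hn
  have hY3b : Y 3 = - ∑ i ∈ Finset.Ico 3 n, s i := telY3' hn hsupp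
  have hLge : (Y 3)^2 ≤ 3 * L := by
    rw [hY3a, hL]
    nlinarith [sq_nonneg (s 0 - s 1), sq_nonneg (s 1 - s 2), sq_nonneg (s 0 - s 2)]
  have hRge : Y 3 ≤ R := by
    rw [hY3b, hR, ← Finset.sum_neg_distrib]
    apply Finset.sum_le_sum
    intro i _
    have := int_self_le_sq (- s i)
    nlinarith
  have hq3 : -3 ≤ HQ n Y := by rcases hq with h | h <;> omega
  have key : (Y 3 - 3 * Y 0)^2 + 3 * Y 3 ≤ 9 := by nlinarith [hid2, hLge, hRge, hq3]
  have hY3le : Y 3 ≤ 3 := by nlinarith [sq_nonneg (Y 3 - 3 * Y 0)]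
  have hT01 : Y 0 = 0 ∨ Y 0 = 1 := by
    have h0 := hpos 0
    rcases (by omega : Y 0 = 0 ∨ Y 0 = 1 ∨ 2 ≤ Y 0) with h | h | h
    · exact Or.inl h
    · exact Or.inr h
    · exfalso
      have h3 := hpos 3
      nlinarith [key, sq_nonneg (2 * Y 3 - 9), mul_nonneg (by omega : (0:ℤ) ≤ Y 0 - 2) (by omega : (0:ℤ) ≤ 3 * Y 0 - Y 3 - 3)]
  rcases hT01 with hT0 | hT1
  · -- Type A : Y 0 = 0
    left
    have hidA : HQ n Y = -(∑ i ∈ Finset.range n, (s i)^2) := by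
      rw [hid, hT0]; ring
    have hsum0 : ∑ i ∈ Finset.range n, s i = 0 := tel' hn hsupp
    have hev : Even (∑ i ∈ Finset.range n, ((s i)^2 - s i)) :=
      Finset.even_sum _ (fun i _ => int_even_sq_sub (s i))
    have hSigEven : Even (∑ i ∈ Finset.range n, (s i)^2) := by
      rw [Finset.sum_sub_distrib, hsum0, sub_zero] at hev
      exact hev
    have hSig2 : ∑ i ∈ Finset.range n, (s i)^2 = 2 := by
      rcases hq with h | h
      · rw [hidA] at h; omega
      · exfalso
        rw [hidA] at h
        obtain ⟨k, hk⟩ := hSigEven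
        omega
    set Z := (Finset.range n).filter (fun i => s i ≠ 0) with hZdef
    have hZsq : ∑ i ∈ Z, (s i)^2 = 2 := by
      rw [← hSig2]
      exact Finset.sum_filter_of_ne (fun i _ h => by
        intro h0; rw [h0] at h; norm_num at h)
    have hZsum : ∑ i ∈ Z, s i = 0 := by
      rw [← hsum0]
      exact Finset.sum_filter_of_ne (fun i _ h => h)
    have hcard2 : Z.card ≤ 2 := by
      have h1 : (Z.card : ℤ) ≤ ∑ i ∈ Z, (s i)^2 := by
        calc (Z.card : ℤ) = ∑ _i ∈ Z, 1 := by simp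
        _ ≤ _ := Finset.sum_le_sum (fun i hi => int_one_le_sq (Finset.mem_filter.mp hi).2)
      rw [hZsq] at h1
      exact_mod_cast h1
    have hs_out : ∀ i, i ∉ Z → s i = 0 := by
      intro i hi
      rcases lt_or_ge i n with h | h
      · by_contra h0
        exact hi (Finset.mem_filter.mpr ⟨Finset.mem_range.mpr h, h0⟩)
      · exact sstep_supp hn hsupp h
    rcases (by omega : Z.card = 0 ∨ Z.card = 1 ∨ Z.card = 2) with h | h | h
    · exfalso
      apply hne
      have hZe : Z = ∅ := Finset.card_eq_zero.mp h
      have hall : ∀ i, s i = 0 := fun i => hs_out i (by rw [hZe]; exact Finset.notMem_empty i)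
      funext j
      show Y j = 0
      rcases eq_or_ne j 0 with rfl | hj
      · exact hT0
      · have h1 := tel Y j
        unfold Yp at h1
        rw [if_neg hj] at h1
        rw [h1]
        exact Finset.sum_eq_zero (fun i _ => hall i)
    · exfalso
      obtain ⟨a, hZa⟩ := Finset.card_eq_one.mp h
      have haZ : a ∈ Z := by rw [hZa]; exact Finset.mem_singleton_self a
      have ha : s a ≠ 0 := (Finset.mem_filter.mp haZ).2
      rw [hZa, Finset.sum_singleton] at hZsum
      exact ha hZsum
    · obtain ⟨a, b, hab, hZab⟩ := Finset.card_eq_two.mp h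
      have hmemZ : ∀ x ∈ Z, x < n := fun x hx => Finset.mem_range.mp (Finset.mem_filter.mp hx).1
      have han : a < n := hmemZ a (by rw [hZab]; exact Finset.mem_insert_self a {b})
      have hbn : b < n := hmemZ b (by rw [hZab]; simp)
      rw [hZab, Finset.sum_pair hab] at hZsum hZsq
      have hout : ∀ i, i ≠ a → i ≠ b → s i = 0 := by
        intro i h1 h2
        apply hs_out
        rw [hZab]
        simp only [Finset.mem_insert, Finset.mem_singleton]
        tauto
      have key2 : ∀ u v : ℕ, u < v → v < n → s u + s v = 0 → (s u)^2 + (s v)^2 = 2 →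
          (∀ i, i ≠ u → i ≠ v → s i = 0) →
          ∃ a' b', 1 ≤ a' ∧ a' ≤ b' ∧ b' ≤ n-1 ∧ Y = rootA a' b' := by
        intro u v huv hvn hsum hsq hout'
        have hYu : Y (u+1) = s u := by
          have h1 := tel Y (u+1)
          unfold Yp at h1
          rw [if_neg (by omega : ¬ u+1 = 0)] at h1
          rw [h1, Finset.sum_eq_single u]
          · intro i hi hiu
            exact hout' i hiu (by have := Finset.mem_range.mp hi; omega)
          · intro hmem
            exact absurd (Finset.mem_range.mpr (by omega)) hmem
        have hsu : s u = 1 := by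
          have h1 := hpos (u+1)
          rw [hYu] at h1
          nlinarith
        have hsv : s v = -1 := by omega
        exact ⟨u+1, v, by omega, by omega, by omega,
          buildA hn u v huv hvn hout' hsu hsv hT0⟩
      rcases hab.lt_or_gt with hlt | hlt
      · exact key2 a b hlt hbn hZsum hZsq hout
      · exact key2 b a hlt han (by linarith) (by linarith) (fun i h1 h2 => hout i h2 h1)
  · -- Type B : Y 0 = 1
    right
    have hidB : HQ n Y = -3 - ((L - Y 3) + (R - Y 3)) := by
      rw [hid2, hT1]; ring
    have hevL : Even (L - Y 3) := by
      rw [hL, hY3a]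
      have : (s 0)^2 + (s 1)^2 + (s 2)^2 - (s 0 + s 1 + s 2)
          = ((s 0)^2 - s 0) + (((s 1)^2 - s 1) + ((s 2)^2 - s 2)) := by ring
      rw [this]
      exact (int_even_sq_sub _).add ((int_even_sq_sub _).add (int_even_sq_sub _))
    have hevR : Even (R - Y 3) := by
      have : R - Y 3 = ∑ i ∈ Finset.Ico 3 n, ((s i)^2 + s i) := by
        rw [hR, hY3b, Finset.sum_add_distrib]
        ring
      rw [this]
      exact Finset.even_sum _ (fun i _ => int_even_sq_add (s i))
    have hLge' : 0 ≤ L - Y 3 := by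
      rw [hL, hY3a]
      have h0 := int_self_le_sq (s 0)
      have h1 := int_self_le_sq (s 1)
      have h2 := int_self_le_sq (s 2)
      omega
    have hRge' : 0 ≤ R - Y 3 := by
      have : R - Y 3 = ∑ i ∈ Finset.Ico 3 n, ((s i)^2 + s i) := by
        rw [hR, hY3b, Finset.sum_add_distrib]; ring
      rw [this]
      apply Finset.sum_nonneg
      intro i _
      have := int_self_le_sq (- s i)
      nlinarith
    have hzero : (L - Y 3) + (R - Y 3) = 0 := by
      rcases hq with h | h
      · exfalso
        rw [hidB] at h
        obtain ⟨k, hkL⟩ := hevL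
        obtain ⟨m, hkR⟩ := hevR
        omega
      · rw [hidB] at h
        omega
    have hL0 : L - Y 3 = 0 := by omega
    have hR0 : R - Y 3 = 0 := by omega
    have hleft : ∀ i, i < 3 → s i = 0 ∨ s i = 1 := by
      intro i hi
      rw [hL, hY3a] at hL0
      have h0 := int_self_le_sq (s 0)
      have h1 := int_self_le_sq (s 1)
      have h2 := int_self_le_sq (s 2)
      have hsq : (s i)^2 = s i := by
        interval_cases i <;> omega
      have : s i * (s i - 1) = 0 := by nlinarith
      rcases mul_eq_zero.mp this with h | h
      · left; exact h
      · right; omega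
    have hright : ∀ i ∈ Finset.Ico 3 n, s i = 0 ∨ s i = -1 := by
      have hR0' : ∑ i ∈ Finset.Ico 3 n, ((s i)^2 + s i) = 0 := by
        rw [← hR0, hR, hY3b, Finset.sum_add_distrib]; ring
      have hterm := (Finset.sum_eq_zero_iff_of_nonneg (fun i _ => by
        have := int_self_le_sq (- s i); nlinarith)).mp hR0'
      intro i hi
      have h := hterm i hi
      have : s i * (s i + 1) = 0 := by nlinarith
      rcases mul_eq_zero.mp this with h' | h'
      · left; exact h'
      · right; omega
    exact buildB hn hsupp hT1 hleft hright

lemma HQ_neg (n : ℕ) (Y : ℕ → ℤ) : HQ n (-Y) = HQ n Y := by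
  unfold HQ
  apply Finset.sum_congr rfl
  intro i _
  apply Finset.sum_congr rfl
  intro j _
  simp only [Pi.neg_apply]
  ring

lemma neg_mem_HRoots {n : ℕ} {Y : ℕ → ℤ} (h : Y ∈ HRoots n) : -Y ∈ HRoots n := by
  obtain ⟨h1, h2, h3, h4⟩ := h
  refine ⟨?_, ?_, ?_, ?_⟩
  · intro i hi; simp [h1 i hi]
  · intro h
    apply h2
    have : Y = - -Y := by ring
    rw [this, h]; ring
  · rcases h3 with h | h
    · exact Or.inr (fun i => by simpa using neg_nonpos_of_nonneg (h i))
    · exact Or.inl (fun i => by simpa using neg_nonneg_of_nonpos (h i))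
  · rwa [HQ_neg]

lemma rootA_at_zero {a b : ℕ} (ha : 1 ≤ a) : rootA a b 0 = 0 := by
  unfold rootA; rw [if_neg (by omega)]

lemma rootA_nonneg (a b j : ℕ) : 0 ≤ rootA a b j := by
  unfold rootA; split_ifs <;> norm_num

lemma rootA_eq_one_iff {a b j : ℕ} : rootA a b j = 1 ↔ (a ≤ j ∧ j ≤ b) := by
  unfold rootA
  split_ifs with h
  · simp [h]
  · simp [h]

lemma rootA_inj {a b a' b' : ℕ} (ha : 1 ≤ a) (hab : a ≤ b) (ha' : 1 ≤ a') (hab' : a' ≤ b')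
    (h : rootA a b = rootA a' b') : a = a' ∧ b = b' := by
  have h1 : rootA a' b' a = 1 := by rw [← h]; exact rootA_eq_one_iff.mpr ⟨le_refl a, hab⟩
  have h2 : rootA a b a' = 1 := by rw [h]; exact rootA_eq_one_iff.mpr ⟨le_refl a', hab'⟩
  have h3 : rootA a' b' b = 1 := by rw [← h]; exact rootA_eq_one_iff.mpr ⟨hab, le_refl b⟩
  have h4 : rootA a b b' = 1 := by rw [h]; exact rootA_eq_one_iff.mpr ⟨hab', le_refl b'⟩
  rw [rootA_eq_one_iff] at h1 h2 h3 h4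
  omega

lemma mem_iff_of_cnt {U U' : Finset ℕ} {i : ℕ}
    (h : cnt U (i+1) - cnt U i = cnt U' (i+1) - cnt U' i) : (i ∈ U ↔ i ∈ U') := by
  rw [cnt_succ, cnt_succ] at h
  have h' : (if i ∈ U then (1:ℤ) else 0) = (if i ∈ U' then 1 else 0) := by linarith
  by_cases hU : i ∈ U <;> by_cases hU' : i ∈ U' <;> simp [hU, hU'] at h' ⊢

lemma rootB_inj {n : ℕ} {S T S' T' : Finset ℕ}
    (hS : S ⊆ ({1,2,3} : Finset ℕ)) (hT : T ⊆ Finset.Ico 3 n)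
    (hS' : S' ⊆ ({1,2,3} : Finset ℕ)) (hT' : T' ⊆ Finset.Ico 3 n)
    (h : rootB S T = rootB S' T') : S = S' ∧ T = T' := by
  have hval : ∀ j, j ≠ 0 → cnt S (j+1) - cnt T j = cnt S' (j+1) - cnt T' j := by
    intro j hj
    have := congrFun h j
    unfold rootB at this
    rwa [if_neg hj, if_neg hj] at this
  have hT3 : ∀ (U : Finset ℕ), U ⊆ Finset.Ico 3 n → ∀ j ≤ 3, cnt U j = 0 := by
    intro U hU j hj
    exact cnt_empty U j (fun x hx => by have := Finset.mem_Ico.mp (hU hx); omega)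
  have hS1 : ∀ (U : Finset ℕ), U ⊆ ({1,2,3} : Finset ℕ) → cnt U 1 = 0 := by
    intro U hU
    exact cnt_empty U 1 (fun x hx => (S_lt hU x hx).1)
  have hcS : ∀ k, 1 ≤ k → k ≤ 4 → cnt S k = cnt S' k := by
    have e1 := hval 1 (by omega)
    have e2 := hval 2 (by omega)
    have e3 := hval 3 (by omega)
    rw [hT3 T hT 1 (by omega), hT3 T' hT' 1 (by omega)] at e1
    rw [hT3 T hT 2 (by omega), hT3 T' hT' 2 (by omega)] at e2
    rw [hT3 T hT 3 (by omega), hT3 T' hT' 3 (by omega)] at e3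
    norm_num at e1 e2 e3
    intro k h1 h4
    interval_cases k
    · rw [hS1 S hS, hS1 S' hS']
    · omega
    · omega
    · omega
  have hSeq : S = S' := by
    ext i
    rcases lt_or_ge i 4 with hi | hi
    · rcases eq_or_ne i 0 with rfl | hi0
      · constructor <;> intro hmem
        · exact absurd ((S_lt hS 0 hmem).1) (by omega)
        · exact absurd ((S_lt hS' 0 hmem).1) (by omega)
      · exact mem_iff_of_cnt (by rw [hcS (i+1) (by omega) (by omega), hcS i (by omega) (by omega)])
    · constructor <;> intro hmem
      · exact absurd ((S_lt hS i hmem).2) (by omega)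
      · exact absurd ((S_lt hS' i hmem).2) (by omega)
  have hcT : ∀ j, cnt T j = cnt T' j := by
    intro j
    rcases eq_or_ne j 0 with rfl | hj
    · rw [cnt_zero, cnt_zero]
    · have := hval j hj
      rw [hSeq] at this
      omega
  have hTeq : T = T' := by
    ext i
    exact mem_iff_of_cnt (by rw [hcT (i+1), hcT i])
  exact ⟨hSeq, hTeq⟩

def PA (n : ℕ) : Finset ((_ : ℕ) × ℕ) :=
  (Finset.Icc 1 (n-1)).sigma fun a => Finset.Icc a (n-1)

def PB (n : ℕ) : Finset ((_ : Finset ℕ) × Finset ℕ) :=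
  (({1,2,3} : Finset ℕ).powerset).sigma fun S => (Finset.Ico 3 n).powersetCard S.card

lemma mem_PA {n : ℕ} {p : (_ : ℕ) × ℕ} :
    p ∈ PA n ↔ (1 ≤ p.1 ∧ p.1 ≤ p.2 ∧ p.2 ≤ n-1) := by
  unfold PA
  rw [Finset.mem_sigma, Finset.mem_Icc, Finset.mem_Icc]
  omega

lemma mem_PB {n : ℕ} {p : (_ : Finset ℕ) × Finset ℕ} :
    p ∈ PB n ↔ (p.1 ⊆ ({1,2,3} : Finset ℕ) ∧ p.2 ⊆ Finset.Ico 3 n ∧ p.1.card = p.2.card) := by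
  unfold PB
  rw [Finset.mem_sigma, Finset.mem_powerset, Finset.mem_powersetCard]
  tauto

lemma gauss : ∀ m : ℕ, 2 * ∑ a ∈ Finset.Icc 1 m, (m+1-a) = m * (m+1) := by
  intro m
  induction m with
  | zero => simp
  | succ m ih =>
    rw [show m+1 = m+1 from rfl]
    have hins : Finset.Icc 1 (m+1) = insert (m+1) (Finset.Icc 1 m) := by
      ext x
      simp only [Finset.mem_Icc, Finset.mem_insert]
      omega
    rw [hins, Finset.sum_insert (by simp [Finset.mem_Icc])]
    have hcong : ∀ a ∈ Finset.Icc 1 m, (m+1+1-a) = (m+1-a) + 1 := by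
      intro a ha
      have := Finset.mem_Icc.mp ha
      omega
    rw [Finset.sum_congr rfl hcong, Finset.sum_add_distrib, Finset.sum_const,
      Nat.card_Icc, smul_eq_mul]
    have e : m + 1 - 1 = m := by omega
    rw [e]
    have e2 : m+1+1-(m+1) = 1 := by omega
    rw [e2]
    nlinarith [ih]

lemma card_PA (n : ℕ) (hn : 5 ≤ n) : 2 * (PA n).card = n * (n-1) := by
  unfold PA
  rw [Finset.card_sigma]
  have hcong : ∀ a ∈ Finset.Icc 1 (n-1), (Finset.Icc a (n-1)).card = (n-1)+1-a := by
    intro a _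
    rw [Nat.card_Icc]
  rw [Finset.sum_congr rfl hcong]
  have := gauss (n-1)
  have e : n - 1 + 1 = n := by omega
  rw [e] at this ⊢
  rw [this]
  have e2 : n - 1 + 1 = n := by omega
  nlinarith [e2]

lemma c2' : ∀ k : ℕ, 2 * Nat.choose (k+1) 2 = (k+1) * k := by
  intro k
  induction k with
  | zero => decide
  | succ k ih =>
    rw [show k+1+1 = (k+1)+1 from rfl, Nat.choose_succ_succ (k+1) 1, Nat.choose_one_right]
    rw [Nat.mul_add, ih]
    ring

lemma c3' : ∀ k : ℕ, 6 * Nat.choose (k+2) 3 = (k+2) * (k+1) * k := by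
  intro k
  induction k with
  | zero => decide
  | succ k ih =>
    rw [show k+1+2 = (k+2)+1 from rfl, Nat.choose_succ_succ (k+2) 2]
    rw [Nat.mul_add, ih]
    have h2 := c2' (k+1)
    have : 6 * Nat.choose (k+2) 2 = 3 * (2 * Nat.choose (k+2) 2) := by ring
    rw [this, h2]
    ring

lemma card_PB (n : ℕ) (hn : 5 ≤ n) : (PB n).card =
    Nat.choose (n-3) 0 + 3 * Nat.choose (n-3) 1 + 3 * Nat.choose (n-3) 2 + Nat.choose (n-3) 3 := by
  unfold PB
  rw [Finset.card_sigma]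
  have hcong : ∀ S ∈ ({1,2,3} : Finset ℕ).powerset,
      ((Finset.Ico 3 n).powersetCard S.card).card = Nat.choose (n-3) S.card := by
    intro S _
    rw [Finset.card_powersetCard, Nat.card_Ico]
  rw [Finset.sum_congr rfl hcong]
  rw [show ({1,2,3} : Finset ℕ).powerset
      = {∅, {1}, {2}, {3}, {1,2}, {1,3}, {2,3}, {1,2,3}} from by decide]
  rw [Finset.sum_insert (by decide), Finset.sum_insert (by decide),
    Finset.sum_insert (by decide), Finset.sum_insert (by decide),
    Finset.sum_insert (by decide), Finset.sum_insert (by decide),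
    Finset.sum_insert (by decide), Finset.sum_singleton]
  norm_num [Finset.card_empty, Finset.card_singleton]
  ring

lemma rootB_at_zero (S T : Finset ℕ) : rootB S T 0 = 1 := by
  unfold rootB; rw [if_pos rfl]

theorem stmt_11 (n : ℕ) (hn : 5 ≤ n) :
    (HRoots n).ncard = (n ^ 3 - n) / 3 := by
  classical
  have hEq : HRoots n =
      (((fun p : (_ : ℕ) × ℕ => rootA p.1 p.2) '' ↑(PA n) ∪
        (fun p : (_ : Finset ℕ) × Finset ℕ => rootB p.1 p.2) '' ↑(PB n)) ∪
        (fun p : (_ : ℕ) × ℕ => -rootA p.1 p.2) '' ↑(PA n)) ∪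
        (fun p : (_ : Finset ℕ) × Finset ℕ => -rootB p.1 p.2) '' ↑(PB n) := by
    ext Y
    constructor
    · intro hY
      rcases hY.2.2.1 with hp | hneg
      · rcases classify n hn Y hY hp with ⟨a,b,h1,h2,h3,hYe⟩ | ⟨S,T,h1,h2,h3,hYe⟩
        · exact Or.inl (Or.inl (Or.inl ⟨⟨a,b⟩,
            Finset.mem_coe.mpr (mem_PA.mpr ⟨h1,h2,h3⟩), hYe.symm⟩))
        · exact Or.inl (Or.inl (Or.inr ⟨⟨S,T⟩,
            Finset.mem_coe.mpr (mem_PB.mpr ⟨h1,h2,h3⟩), hYe.symm⟩))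
      · have hY' : -Y ∈ HRoots n := neg_mem_HRoots hY
        have hp' : ∀ i, 0 ≤ (-Y) i := fun i => by
          simpa using neg_nonneg.mpr (hneg i)
        rcases classify n hn (-Y) hY' hp' with ⟨a,b,h1,h2,h3,hYe⟩ | ⟨S,T,h1,h2,h3,hYe⟩
        · exact Or.inl (Or.inr ⟨⟨a,b⟩,
            Finset.mem_coe.mpr (mem_PA.mpr ⟨h1,h2,h3⟩),
            by show -rootA a b = Y; rw [← hYe, neg_neg]⟩)
        · exact Or.inr ⟨⟨S,T⟩,
            Finset.mem_coe.mpr (mem_PB.mpr ⟨h1,h2,h3⟩),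
            by show -rootB S T = Y; rw [← hYe, neg_neg]⟩
    · rintro ((((⟨p,hp,rfl⟩ | ⟨p,hp,rfl⟩)) | ⟨p,hp,rfl⟩) | ⟨p,hp,rfl⟩)
      · obtain ⟨h1,h2,h3⟩ := mem_PA.mp (Finset.mem_coe.mp hp)
        exact rootA_mem n p.1 p.2 hn h1 h2 h3
      · obtain ⟨h1,h2,h3⟩ := mem_PB.mp (Finset.mem_coe.mp hp)
        exact rootB_mem h1 h2 h3 hn
      · obtain ⟨h1,h2,h3⟩ := mem_PA.mp (Finset.mem_coe.mp hp)
        exact neg_mem_HRoots (rootA_mem n p.1 p.2 hn h1 h2 h3)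
      · obtain ⟨h1,h2,h3⟩ := mem_PB.mp (Finset.mem_coe.mp hp)
        exact neg_mem_HRoots (rootB_mem h1 h2 h3 hn)
  -- value lemmas for disjointness
  have hA0 : ∀ Y ∈ (fun p : (_ : ℕ) × ℕ => rootA p.1 p.2) '' ↑(PA n), Y 0 = 0 := by
    rintro Y ⟨p, hp, rfl⟩
    exact rootA_at_zero (mem_PA.mp (Finset.mem_coe.mp hp)).1
  have hA'0 : ∀ Y ∈ (fun p : (_ : ℕ) × ℕ => -rootA p.1 p.2) '' ↑(PA n), Y 0 = 0 := by
    rintro Y ⟨p, hp, rfl⟩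
    simp only [Pi.neg_apply]
    rw [rootA_at_zero (mem_PA.mp (Finset.mem_coe.mp hp)).1]
    ring
  have hB0 : ∀ Y ∈ (fun p : (_ : Finset ℕ) × Finset ℕ => rootB p.1 p.2) '' ↑(PB n), Y 0 = 1 := by
    rintro Y ⟨p, hp, rfl⟩
    exact rootB_at_zero p.1 p.2
  have hB'0 : ∀ Y ∈ (fun p : (_ : Finset ℕ) × Finset ℕ => -rootB p.1 p.2) '' ↑(PB n), Y 0 = -1 := by
    rintro Y ⟨p, hp, rfl⟩
    simp only [Pi.neg_apply]
    rw [rootB_at_zero p.1 p.2]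
  have dAB : Disjoint ((fun p : (_ : ℕ) × ℕ => rootA p.1 p.2) '' ↑(PA n))
      ((fun p : (_ : Finset ℕ) × Finset ℕ => rootB p.1 p.2) '' ↑(PB n)) := by
    rw [Set.disjoint_left]
    intro Y h1 h2
    have := hA0 Y h1
    have := hB0 Y h2
    omega
  have dAA' : Disjoint ((fun p : (_ : ℕ) × ℕ => rootA p.1 p.2) '' ↑(PA n))
      ((fun p : (_ : ℕ) × ℕ => -rootA p.1 p.2) '' ↑(PA n)) := by
    rw [Set.disjoint_left]
    rintro Y ⟨p, hp, rfl⟩ ⟨q, hq, hYq⟩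
    obtain ⟨h1,h2,h3⟩ := mem_PA.mp (Finset.mem_coe.mp hp)
    have hval : rootA p.1 p.2 p.1 = 1 := rootA_eq_one_iff.mpr ⟨le_refl _, h2⟩
    have hval2 := congrFun hYq p.1
    simp only [Pi.neg_apply] at hval2
    have := rootA_nonneg q.1 q.2 p.1
    omega
  have dAB' : Disjoint ((fun p : (_ : ℕ) × ℕ => rootA p.1 p.2) '' ↑(PA n))
      ((fun p : (_ : Finset ℕ) × Finset ℕ => -rootB p.1 p.2) '' ↑(PB n)) := by
    rw [Set.disjoint_left]
    intro Y h1 h2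
    have := hA0 Y h1
    have := hB'0 Y h2
    omega
  have dBA' : Disjoint ((fun p : (_ : Finset ℕ) × Finset ℕ => rootB p.1 p.2) '' ↑(PB n))
      ((fun p : (_ : ℕ) × ℕ => -rootA p.1 p.2) '' ↑(PA n)) := by
    rw [Set.disjoint_left]
    intro Y h1 h2
    have := hB0 Y h1
    have := hA'0 Y h2
    omega
  have dBB' : Disjoint ((fun p : (_ : Finset ℕ) × Finset ℕ => rootB p.1 p.2) '' ↑(PB n))
      ((fun p : (_ : Finset ℕ) × Finset ℕ => -rootB p.1 p.2) '' ↑(PB n)) := by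
    rw [Set.disjoint_left]
    intro Y h1 h2
    have := hB0 Y h1
    have := hB'0 Y h2
    omega
  have dA'B' : Disjoint ((fun p : (_ : ℕ) × ℕ => -rootA p.1 p.2) '' ↑(PA n))
      ((fun p : (_ : Finset ℕ) × Finset ℕ => -rootB p.1 p.2) '' ↑(PB n)) := by
    rw [Set.disjoint_left]
    intro Y h1 h2
    have := hA'0 Y h1
    have := hB'0 Y h2
    omega
  have finA : ((fun p : (_ : ℕ) × ℕ => rootA p.1 p.2) '' ↑(PA n)).Finite :=
    ((PA n).finite_toSet).image _
  have finB : ((fun p : (_ : Finset ℕ) × Finset ℕ => rootB p.1 p.2) '' ↑(PB n)).Finite :=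
    ((PB n).finite_toSet).image _
  have finA' : ((fun p : (_ : ℕ) × ℕ => -rootA p.1 p.2) '' ↑(PA n)).Finite :=
    ((PA n).finite_toSet).image _
  have finB' : ((fun p : (_ : Finset ℕ) × Finset ℕ => -rootB p.1 p.2) '' ↑(PB n)).Finite :=
    ((PB n).finite_toSet).image _
  have injA : Set.InjOn (fun p : (_ : ℕ) × ℕ => rootA p.1 p.2) ↑(PA n) := by
    rintro ⟨a,b⟩ hp ⟨a',b'⟩ hq h
    obtain ⟨h1,h2,h3⟩ := mem_PA.mp (Finset.mem_coe.mp hp)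
    obtain ⟨h1',h2',h3'⟩ := mem_PA.mp (Finset.mem_coe.mp hq)
    obtain ⟨e1, e2⟩ := rootA_inj h1 h2 h1' h2' h
    subst e1
    subst e2
    rfl
  have injA' : Set.InjOn (fun p : (_ : ℕ) × ℕ => -rootA p.1 p.2) ↑(PA n) := by
    intro p hp q hq h
    exact injA hp hq (neg_injective h)
  have injB : Set.InjOn (fun p : (_ : Finset ℕ) × Finset ℕ => rootB p.1 p.2) ↑(PB n) := by
    rintro ⟨S,T⟩ hp ⟨S',T'⟩ hq h
    obtain ⟨h1,h2,h3⟩ := mem_PB.mp (Finset.mem_coe.mp hp)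
    obtain ⟨h1',h2',h3'⟩ := mem_PB.mp (Finset.mem_coe.mp hq)
    obtain ⟨e1, e2⟩ := rootB_inj h1 h2 h1' h2' h
    subst e1
    subst e2
    rfl
  have injB' : Set.InjOn (fun p : (_ : Finset ℕ) × Finset ℕ => -rootB p.1 p.2) ↑(PB n) := by
    intro p hp q hq h
    exact injB hp hq (neg_injective h)
  rw [hEq]
  rw [Set.ncard_union_eq (Disjoint.union_left (Disjoint.union_left dAB' dBB') dA'B')
    ((finA.union finB).union finA') finB']
  rw [Set.ncard_union_eq (Disjoint.union_left dAA' dBA') (finA.union finB) finA']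
  rw [Set.ncard_union_eq dAB finA finB]
  rw [Set.ncard_image_of_injOn injA, Set.ncard_image_of_injOn injB,
    Set.ncard_image_of_injOn injA', Set.ncard_image_of_injOn injB',
    Set.ncard_coe_finset, Set.ncard_coe_finset]
  -- arithmetic
  obtain ⟨m, rfl⟩ : ∃ m, n = m + 5 := ⟨n - 5, by omega⟩
  have h1 := card_PA (m+5) hn
  rw [show m+5-1 = m+4 by omega] at h1
  have h2 := card_PB (m+5) hn
  rw [show m+5-3 = m+2 by omega, Nat.choose_zero_right, Nat.choose_one_right] at h2
  have hq2 := c2' (m+1)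
  rw [show m+1+1 = m+2 by omega] at hq2
  have hq3 := c3' m
  have h6 : 6 * ((PA (m+5)).card + (PB (m+5)).card) = (m+4)*(m+5)*(m+6) := by
    zify at h1 h2 hq2 hq3 ⊢
    linear_combination 3*h1 + 6*h2 + 9*hq2 + hq3
  have hP : (m+5)^3 - (m+5) = (m+4)*(m+5)*(m+6) := by
    have e : (m+5)^3 = (m+4)*(m+5)*(m+6) + (m+5) := by ring
    omega
  rw [hP]
  generalize hQg : (m+4)*(m+5)*(m+6) = Q at h6 ⊢
  omega
end

section
/- In Hₙ (n ≥ 6), every positive root Y = Σ aᵢEᵢ with a₀ ≠ 0, a₁ ≠ 0 and a_{n-1} ≠ 0 satisfies: (a) a₀ = a₁ = a_{n-1} = 1; (b) a₁ ≤ a₂ ≤ a₃ ≥ a₄ ≥ … ≥ a_{n-1} and a₃ ≤ 3; (c) |aᵢ - aᵢ₊₁| ≤ 1 for all 1 ≤ i ≤ n-2. -/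
open Finset

private lemma hq_tele (Y : ℕ → ℤ) (a b : ℕ) (h : a ≤ b) :
    ∑ i ∈ Finset.Ico a b, (Y i - Y (i+1)) = Y a - Y b := by
  induction b, h using Nat.le_induction with
  | base => simp
  | succ b hb ih => rw [Finset.sum_Ico_succ_top hb, ih]; ring

private lemma hq_abs_le_sq (d : ℤ) : |d| ≤ d^2 := by
  rw [← sq_abs]; nlinarith [abs_nonneg d, sq_nonneg (|d| - 1)]

private lemma HM_zero {i j : ℕ} (hij : i ≠ j)
    (h : ¬ ((i = 0 ∧ j = 3) ∨ (j = 0 ∧ i = 3) ∨ (1 ≤ i ∧ i + 1 = j) ∨ (1 ≤ j ∧ j + 1 = i))) :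
    HM i j = 0 := by
  simp [HM, HAdj, hij, h]

private lemma HM_one {i j : ℕ} (hij : i ≠ j)
    (h : (i = 0 ∧ j = 3) ∨ (j = 0 ∧ i = 3) ∨ (1 ≤ i ∧ i + 1 = j) ∨ (1 ≤ j ∧ j + 1 = i)) :
    HM i j = 1 := by
  simp [HM, HAdj, hij, h]

private lemma HM_diag_s13 {i : ℕ} (hi : i ≠ 0) : HM i i = -2 := by simp [HM, hi]

private lemma HQ_step (n : ℕ) (hn : 5 ≤ n) (Y : ℕ → ℤ) :
    HQ (n+1) Y = HQ n Y - 2*(Y n)^2 + 2*(Y (n-1))*(Y n) := by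
  have hcol : ∀ i ∈ Finset.range n, Y i * HM i n * Y n
      = (if i = n - 1 then Y (n-1) * Y n else 0) := by
    intro i hi
    rw [Finset.mem_range] at hi
    split_ifs with h
    · subst h; rw [HM_one (by omega) (by omega)]; ring
    · rw [HM_zero (by omega) (by omega)]; ring
  have hrow : ∀ j ∈ Finset.range n, Y n * HM n j * Y j
      = (if j = n - 1 then Y n * Y (n-1) else 0) := by
    intro j hj
    rw [Finset.mem_range] at hj
    split_ifs with h
    · subst h; rw [HM_one (by omega) (by omega)]; ring
    · rw [HM_zero (by omega) (by omega)]; ring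
  have hmem : n - 1 ∈ Finset.range n := by simp; omega
  unfold HQ
  rw [Finset.sum_range_succ, Finset.sum_range_succ]
  rw [Finset.sum_congr rfl hrow, Finset.sum_ite_eq' _ (n-1) (fun _ => Y n * Y (n-1)),
    if_pos hmem]
  have : ∀ i ∈ Finset.range n, (∑ j ∈ Finset.range (n+1), Y i * HM i j * Y j)
      = (∑ j ∈ Finset.range n, Y i * HM i j * Y j)
        + (if i = n - 1 then Y (n-1) * Y n else 0) := by
    intro i hi
    rw [Finset.sum_range_succ, hcol i hi]
  rw [Finset.sum_congr rfl this, Finset.sum_add_distrib,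
    Finset.sum_ite_eq' _ (n-1) (fun _ => Y (n-1) * Y n), if_pos hmem, HM_diag_s13 (by omega)]
  ring

private lemma HQ_eq (n : ℕ) (hn : 6 ≤ n) (Y : ℕ → ℤ) :
    HQ n Y = -(3*(Y 0)^2 - 2*(Y 3)*(Y 0) + (Y 1)^2 + (Y (n-1))^2
      + ∑ i ∈ Finset.Ico 1 (n-1), (Y i - Y (i+1))^2) := by
  induction n, hn using Nat.le_induction with
  | base =>
      show (∑ i ∈ Finset.range 6, ∑ j ∈ Finset.range 6, Y i * HM i j * Y j) = _
      norm_num [Finset.sum_range_succ, Finset.sum_Ico_eq_sum_range, HM, HAdj]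
      ring
  | succ n hn ih =>
      rw [HQ_step n (by omega) Y, ih]
      have h1 : n + 1 - 1 = (n-1) + 1 := by omega
      rw [h1, Finset.sum_Ico_succ_top (by omega : 1 ≤ n - 1)]
      have h2 : n - 1 + 1 = n := by omega
      rw [h2]
      ring

private lemma hq_main_arith (c f b e K S1 S2 : ℤ)
    (hid2 : 3*c^2 - 2*b*c + f^2 + e^2 + S1 + S2 = K)
    (hK : K = 2 ∨ K = 3)
    (hc1 : 1 ≤ c) (hf1 : 1 ≤ f) (he1 : 1 ≤ e) (hb0 : 0 ≤ b)
    (hS1nn : 0 ≤ S1) (hS2nn : 0 ≤ S2)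
    (hS1b : (f - b)^2 ≤ 2 * S1) (hS1a : |f - b| ≤ S1) (hS2a : b - e ≤ S2) :
    c = 1 ∧ f = 1 ∧ e = 1 ∧ K = 3 ∧ S1 = b - 1 ∧ S2 = b - 1 ∧ b ≤ 3 ∧ 1 ≤ b := by
  have hK3 : K ≤ 3 := by omega
  have hK2 : 2 ≤ K := by omega
  have hee : 0 ≤ e^2 - e := by nlinarith
  have hff : 0 ≤ f^2 - f := by nlinarith
  have hb3 : b ≤ 3 := by nlinarith [sq_nonneg (b - 3*c), sq_nonneg (3*f - b)]
  have hc2 : c = 1 := by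
    by_contra hcg
    have hcg2 : 2 ≤ c := by omega
    have h1 : (0:ℤ) ≤ 3*c - b - 3 := by linarith
    have h2 : (0:ℤ) ≤ 3*c - b := by linarith
    nlinarith [sq_nonneg (3*f - b), mul_nonneg h1 h2]
  subst hc2
  have hb1 : 1 ≤ b := by nlinarith
  have hfb : f - b ≤ S1 := (le_abs_self _).trans hS1a
  have hbf : b - f ≤ S1 := by
    have := neg_abs_le (f - b); linarith
  have hf2 : f ≤ 2 := by nlinarith [sq_nonneg (f - 3), sq_nonneg (e - 1)]
  have he2 : e ≤ 2 := by nlinarith [sq_nonneg (e - 3), sq_nonneg (f - 1)]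
  refine ⟨rfl, ?_⟩
  interval_cases f <;> interval_cases e <;> interval_cases b <;> omega

private lemma hq_abs_le_one {d : ℤ} (h : d^2 = |d|) : |d| ≤ 1 := by
  nlinarith [sq_abs d, abs_nonneg d, sq_nonneg (|d| - 1)]

private lemma hq_s1_analysis (d1 d2 b : ℤ) (hsum : d1 + d2 = 1 - b)
    (hS : d1^2 + d2^2 = b - 1) :
    d1 ≤ 0 ∧ d2 ≤ 0 ∧ |d1| ≤ 1 ∧ |d2| ≤ 1 := by
  have a1 := hq_abs_le_sq d1
  have a2 := hq_abs_le_sq d2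
  have hsumabs : |d1| + |d2| = b - 1 := by
    have h1 : b - 1 ≤ |d1| + |d2| := by
      calc b - 1 = -(d1 + d2) := by linarith
        _ ≤ |d1 + d2| := neg_le_abs _
        _ ≤ _ := abs_add_le _ _
    linarith
  have hq1 : d1^2 = |d1| := by linarith
  have hq2 : d2^2 = |d2| := by linarith
  have hle1 := hq_abs_le_one hq1
  have hle2 := hq_abs_le_one hq2
  rcases abs_cases d1 with ⟨u1, _⟩ | ⟨u1, _⟩ <;>
    rcases abs_cases d2 with ⟨u2, _⟩ | ⟨u2, _⟩ <;>
    refine ⟨by linarith, by linarith, hle1, hle2⟩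

set_option maxHeartbeats 1000000 in
/-- Structure of the positive roots of `Hₙ` (`n ≥ 6`) with `a₀ ≠ 0`, `a₁ ≠ 0` and
`a_{n-1} ≠ 0`:
(a) `a₀ = a₁ = a_{n-1} = 1`;
(b) `a₁ ≤ a₂ ≤ a₃ ≥ a₄ ≥ ⋯ ≥ a_{n-1}` and `a₃ ≤ 3`;
(c) `|aᵢ - aᵢ₊₁| ≤ 1` for `1 ≤ i ≤ n-2`. -/
theorem stmt_13 (n : ℕ) (hn : 6 ≤ n) (Y : ℕ → ℤ)
    (hsupp : ∀ i, n ≤ i → Y i = 0)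
    (heff : ∀ i, 0 ≤ Y i)
    (hroot : HQ n Y = -2 ∨ HQ n Y = -3)
    (h0 : Y 0 ≠ 0) (h1 : Y 1 ≠ 0) (hlast : Y (n - 1) ≠ 0) :
    (Y 0 = 1 ∧ Y 1 = 1 ∧ Y (n - 1) = 1) ∧
    (Y 1 ≤ Y 2 ∧ Y 2 ≤ Y 3 ∧ (∀ i, 3 ≤ i → i + 1 ≤ n - 1 → Y (i + 1) ≤ Y i) ∧
      Y 3 ≤ 3) ∧
    (∀ i, 1 ≤ i → i ≤ n - 2 → |Y i - Y (i + 1)| ≤ 1) := by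
  have hid := HQ_eq n hn Y
  have hsplit : (∑ i ∈ Finset.Ico 1 (n-1), (Y i - Y (i+1))^2)
      = (∑ i ∈ Finset.Ico 1 3, (Y i - Y (i+1))^2)
        + (∑ i ∈ Finset.Ico 3 (n-1), (Y i - Y (i+1))^2) :=
    (Finset.sum_Ico_consecutive _ (by omega) (by omega)).symm
  set S1 := ∑ i ∈ Finset.Ico 1 3, (Y i - Y (i+1))^2 with hS1def
  set S2 := ∑ i ∈ Finset.Ico 3 (n-1), (Y i - Y (i+1))^2 with hS2def
  have hS1nn : 0 ≤ S1 := Finset.sum_nonneg (fun i _ => sq_nonneg _)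
  have hS2nn : 0 ≤ S2 := Finset.sum_nonneg (fun i _ => sq_nonneg _)
  have hid2 : 3*(Y 0)^2 - 2*(Y 3)*(Y 0) + (Y 1)^2 + (Y (n-1))^2 + S1 + S2 = -(HQ n Y) := by
    rw [hsplit] at hid; linarith
  have hS1ex : S1 = (Y 1 - Y 2)^2 + (Y 2 - Y 3)^2 := by
    rw [hS1def]
    norm_num [Finset.sum_Ico_succ_top, Finset.sum_Ico_eq_sum_range]
  have hS1b : (Y 1 - Y 3)^2 ≤ 2 * S1 := by
    rw [hS1ex]; nlinarith [sq_nonneg ((Y 1 - Y 2) - (Y 2 - Y 3))]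
  have hS1a : |Y 1 - Y 3| ≤ S1 := by
    rw [hS1ex, show Y 1 - Y 3 = (Y 1 - Y 2) + (Y 2 - Y 3) from by ring]
    calc |(Y 1 - Y 2) + (Y 2 - Y 3)| ≤ |Y 1 - Y 2| + |Y 2 - Y 3| := abs_add_le _ _
      _ ≤ _ := add_le_add (hq_abs_le_sq _) (hq_abs_le_sq _)
  have htele2 : ∑ i ∈ Finset.Ico 3 (n-1), (Y i - Y (i+1)) = Y 3 - Y (n-1) :=
    hq_tele Y 3 (n-1) (by omega)
  have habs2 : ∑ i ∈ Finset.Ico 3 (n-1), |Y i - Y (i+1)| ≤ S2 :=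
    Finset.sum_le_sum (fun i _ => hq_abs_le_sq _)
  have habs2' : |Y 3 - Y (n-1)| ≤ ∑ i ∈ Finset.Ico 3 (n-1), |Y i - Y (i+1)| := by
    have h := Finset.abs_sum_le_sum_abs (fun i => Y i - Y (i+1)) (Finset.Ico 3 (n-1))
    rwa [htele2] at h
  have hS2a : Y 3 - Y (n-1) ≤ S2 :=
    (le_abs_self _).trans (habs2'.trans habs2)
  have hc1 : 1 ≤ Y 0 := by have := heff 0; omega
  have hf1 : 1 ≤ Y 1 := by have := heff 1; omega
  have he1 : 1 ≤ Y (n-1) := by have := heff (n-1); omega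
  obtain ⟨hc, hf, he, hK, hS1v, hS2v, hb3, hb1⟩ :=
    hq_main_arith (Y 0) (Y 1) (Y 3) (Y (n-1)) (-(HQ n Y)) S1 S2 hid2
      (by omega) hc1 hf1 he1 (heff 3) hS1nn hS2nn hS1b hS1a hS2a
  -- equality analysis on S2
  have habsum : ∑ i ∈ Finset.Ico 3 (n-1), |Y i - Y (i+1)| = Y 3 - 1 := by
    rw [he] at habs2' htele2
    have h1 : |Y 3 - 1| = Y 3 - 1 := abs_of_nonneg (by omega)
    rw [h1] at habs2'
    linarith
  have heach2 : ∀ i ∈ Finset.Ico 3 (n-1), (Y i - Y (i+1))^2 - |Y i - Y (i+1)| = 0 := by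
    have hz : ∑ i ∈ Finset.Ico 3 (n-1), ((Y i - Y (i+1))^2 - |Y i - Y (i+1)|) = 0 := by
      rw [Finset.sum_sub_distrib, habsum, ← hS2def, hS2v]; ring
    exact (Finset.sum_eq_zero_iff_of_nonneg
      (fun i _ => sub_nonneg.2 (hq_abs_le_sq _))).mp hz
  have heach2' : ∀ i ∈ Finset.Ico 3 (n-1), |Y i - Y (i+1)| - (Y i - Y (i+1)) = 0 := by
    have hz : ∑ i ∈ Finset.Ico 3 (n-1), (|Y i - Y (i+1)| - (Y i - Y (i+1))) = 0 := by
      rw [Finset.sum_sub_distrib, habsum, htele2, he]; ring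
    exact (Finset.sum_eq_zero_iff_of_nonneg
      (fun i _ => sub_nonneg.2 (le_abs_self _))).mp hz
  have key2 : ∀ i, 3 ≤ i → i < n - 1 → 0 ≤ Y i - Y (i+1) ∧ |Y i - Y (i+1)| ≤ 1 := by
    intro i h3 hlt
    have hmem : i ∈ Finset.Ico 3 (n-1) := Finset.mem_Ico.2 ⟨h3, hlt⟩
    have e1 := heach2 i hmem
    have e2 := heach2' i hmem
    constructor
    · have := abs_nonneg (Y i - Y (i+1)); linarith
    · exact hq_abs_le_one (by linarith)
  -- equality analysis on S1
  have hS1v' : (Y 1 - Y 2)^2 + (Y 2 - Y 3)^2 = Y 3 - 1 := by rw [← hS1ex]; linarith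
  have key1 : Y 1 ≤ Y 2 ∧ Y 2 ≤ Y 3 ∧ |Y 1 - Y 2| ≤ 1 ∧ |Y 2 - Y 3| ≤ 1 := by
    obtain ⟨p1, p2, p3, p4⟩ := hq_s1_analysis (Y 1 - Y 2) (Y 2 - Y 3) (Y 3)
      (by rw [hf]; ring) hS1v'
    exact ⟨by linarith, by linarith, p3, p4⟩
  refine ⟨⟨hc, hf, he⟩, ⟨key1.1, key1.2.1, ?_, hb3⟩, ?_⟩
  · intro i h3 hle
    have := (key2 i h3 (by omega)).1
    omega
  · intro i hi1 hi2
    rcases lt_or_ge i 3 with h | h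
    · interval_cases i
      · exact key1.2.2.1
      · exact key1.2.2.2
    · exact (key2 i h (by omega)).2
end

section
/- Let Γ be a rational triple tree (rational tree of multiplicity 3). Then any root Y in the triple root system R(Γ) satisfies -Z(Γ) ≤ Y ≤ Z(Γ) componentwise, where Z(Γ) is the Artin cycle of Γ; i.e., the Artin cycle is the highest root. -/
open Finset

def treeM (n : ℕ) (G : SimpleGraph (Fin n)) [DecidableRel G.Adj] (w : Fin n → ℤ)
    (i j : Fin n) : ℤ :=
  if i = j then -w i else if G.Adj i j then 1 else 0

def quadForm (n : ℕ) (M : Fin n → Fin n → ℤ) (Y : Fin n → ℤ) : ℤ :=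
  ∑ i, ∑ j, Y i * M i j * Y j

def bilF (n : ℕ) (M : Fin n → Fin n → ℤ) (X Y : Fin n → ℤ) : ℤ :=
  ∑ i, ∑ j, X i * M i j * Y j

lemma quad_add (n : ℕ) (M : Fin n → Fin n → ℤ) (X Y : Fin n → ℤ) :
    quadForm n M (X + Y) = quadForm n M X + bilF n M X Y + bilF n M Y X + quadForm n M Y := by
  unfold quadForm bilF
  have h : ∀ i j : Fin n, (X + Y) i * M i j * ((X + Y) j)
      = X i * M i j * X j + X i * M i j * Y j + Y i * M i j * X j + Y i * M i j * Y j := by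
    intro i j; simp [Pi.add_apply]; ring
  simp_rw [h, Finset.sum_add_distrib]

lemma quad_neg (n : ℕ) (M : Fin n → Fin n → ℤ) (Y : Fin n → ℤ) :
    quadForm n M (-Y) = quadForm n M Y := by
  unfold quadForm
  have h : ∀ i j : Fin n, (-Y) i * M i j * ((-Y) j) = Y i * M i j * Y j := by
    intro i j; simp only [Pi.neg_apply]; ring
  simp_rw [h]

lemma bil_symm (n : ℕ) (M : Fin n → Fin n → ℤ) (hM : ∀ i j, M i j = M j i) (X Y : Fin n → ℤ) :
    bilF n M X Y = bilF n M Y X := by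
  unfold bilF
  rw [Finset.sum_comm]
  refine Finset.sum_congr rfl fun j _ => Finset.sum_congr rfl fun i _ => ?_
  rw [hM i j]; ring

lemma walk_cross {n : ℕ} {G : SimpleGraph (Fin n)} (Z : Fin n → ℤ) (hZn : ∀ x, 0 ≤ Z x) :
    ∀ {a b : Fin n} (_ : G.Walk a b), 0 < Z a → Z b = 0 →
      ∃ u v, G.Adj u v ∧ 0 < Z u ∧ Z v = 0 := by
  intro a b p
  induction p with
  | nil => intro h1 h2; omega
  | @cons a c b hadj p ih =>
    intro h1 h2
    by_cases hc : Z c = 0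
    · exact ⟨a, c, hadj, h1, hc⟩
    · by_cases hcpos : 0 < Z c
      · exact ih hcpos h2
      · exact ⟨a, c, hadj, h1, by have := hZn c; omega⟩

/-- Let `Γ` be a rational triple tree: a tree with a unique vertex `i₀` of weight 3,
all other vertices of weight 2, negative definite intersection matrix, and
`pₐ(Y) ≤ 0` for every nonzero effective divisor.  Let `Z` be the Artin cycle: the
minimal nonzero effective divisor with `(Z·Eᵢ) ≤ 0` for all `i`, with `Z·Z = -3`.
Then every root `Y ∈ R(Γ)` (an effective or anti-effective divisor with
`(Y·Y) ∈ {-2,-3}`) satisfies `-Z ≤ Y ≤ Z` componentwise. -/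
theorem stmt_18 (n : ℕ) (G : SimpleGraph (Fin n)) [DecidableRel G.Adj]
    (hG : G.IsTree)
    (w : Fin n → ℤ) (i₀ : Fin n) (hw0 : w i₀ = 3) (hw : ∀ i, i ≠ i₀ → w i = 2)
    (hnegdef : ∀ x : Fin n → ℤ, x ≠ 0 → quadForm n (treeM n G w) x < 0)
    (hrat : ∀ Y' : Fin n → ℤ, (∀ i, 0 ≤ Y' i) → Y' ≠ 0 →
      quadForm n (treeM n G w) Y' + (∑ i, Y' i * (w i - 2)) + 2 ≤ 0)
    (Z : Fin n → ℤ) (hZeff : ∀ i, 0 ≤ Z i) (hZne : Z ≠ 0)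
    (hZdot : ∀ i, (∑ j, Z j * treeM n G w j i) ≤ 0)
    (hZmin : ∀ Z' : Fin n → ℤ, (∀ i, 0 ≤ Z' i) → Z' ≠ 0 →
      (∀ i, (∑ j, Z' j * treeM n G w j i) ≤ 0) → ∀ i, Z i ≤ Z' i)
    (hZZ : quadForm n (treeM n G w) Z = -3) :
    ∀ Y : Fin n → ℤ, ((∀ i, 0 ≤ Y i) ∨ (∀ i, Y i ≤ 0)) →
      (quadForm n (treeM n G w) Y = -2 ∨ quadForm n (treeM n G w) Y = -3) →
      ∀ i, -Z i ≤ Y i ∧ Y i ≤ Z i := by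
  set M : Fin n → Fin n → ℤ := treeM n G w with hMdef
  have hMsymm : ∀ i j, M i j = M j i := by
    intro i j
    by_cases h : i = j
    · subst h; rfl
    · simp only [hMdef, treeM, if_neg h, if_neg (Ne.symm h)]
      by_cases ha : G.Adj i j
      · rw [if_pos ha, if_pos (G.adj_symm ha)]
      · rw [if_neg ha, if_neg (fun h' => ha (G.adj_symm h'))]
  have hMoff : ∀ i j, i ≠ j → 0 ≤ M i j := by
    intro i j h
    simp only [hMdef, treeM, if_neg h]
    split <;> norm_num
  have hMadj : ∀ i j, G.Adj i j → M i j = 1 := by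
    intro i j h
    simp only [hMdef, treeM, if_neg (G.ne_of_adj h), if_pos h]
  -- Z has full support
  have hZpos : ∀ i, 1 ≤ Z i := by
    by_contra hcon
    push_neg at hcon
    obtain ⟨i, hi⟩ := hcon
    have hZi : Z i = 0 := le_antisymm (by omega) (hZeff i)
    obtain ⟨j, hj⟩ := Function.ne_iff.1 hZne
    have hjpos : 0 < Z j := lt_of_le_of_ne (hZeff j) (Ne.symm hj)
    obtain ⟨p⟩ := hG.isConnected.preconnected j i
    obtain ⟨u, v, huv, hu, hv⟩ := walk_cross Z hZeff p hjpos hZi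
    have h1 : ∀ x : Fin n, 0 ≤ Z x * M x v := by
      intro x
      by_cases hx : x = v
      · subst hx; rw [hv]; simp
      · exact mul_nonneg (hZeff x) (hMoff x v hx)
    have h2 : Z u * M u v ≤ ∑ x, Z x * M x v :=
      Finset.single_le_sum (fun x _ => h1 x) (Finset.mem_univ u)
    rw [hMadj u v huv] at h2
    have := hZdot v
    omega
  -- sum over canonical class
  have sumK : ∀ X : Fin n → ℤ, (∑ i, X i * (w i - 2)) = X i₀ := by
    intro X
    rw [Finset.sum_eq_single i₀]
    · rw [hw0]; ring
    · intro b _ hb; rw [hw b hb]; ring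
    · intro h; exact absurd (Finset.mem_univ i₀) h
  -- key: effective roots are ≤ Z
  have key : ∀ Y : Fin n → ℤ, (∀ i, 0 ≤ Y i) →
      (quadForm n M Y = -2 ∨ quadForm n M Y = -3) → ∀ i, Y i ≤ Z i := by
    intro Y hY hQ
    by_contra hcon
    push_neg at hcon
    obtain ⟨k, hk⟩ := hcon
    set A : Fin n → ℤ := fun i => min (Y i) (Z i) with hAdef
    set B : Fin n → ℤ := fun i => Y i - A i with hBdef
    have hYAB : Y = A + B := by
      funext i; simp [hAdef, hBdef]
    have hA : ∀ i, 0 ≤ A i := fun i => le_min (hY i) (hZeff i)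
    have hB : ∀ i, 0 ≤ B i := fun i => by
      simp only [hBdef, hAdef, sub_nonneg]; exact min_le_left _ _
    have hAne : A ≠ 0 := by
      intro h0
      have h1 : A k = 0 := congrFun h0 k
      have h2 : 1 ≤ A k := le_min (by linarith [hZpos k]) (hZpos k)
      omega
    have hBne : B ≠ 0 := by
      intro h0
      have h1 : B k = 0 := congrFun h0 k
      have h2 : A k = Z k := min_eq_right (le_of_lt hk)
      simp only [hBdef] at h1
      omega
    have hrA := hrat A hA hAne
    have hrB := hrat B hB hBne
    rw [sumK] at hrA hrB
    -- cross term nonpositive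
    have hcross : bilF n M A B ≤ 0 := by
      have hcol : ∀ j, B j ≠ 0 → (∑ i, A i * M i j) ≤ 0 := by
        intro j hj
        have hAZ : A j = Z j := by
          have : Z j < Y j := by
            by_contra h
            push_neg at h
            have : A j = Y j := min_eq_left h
            simp only [hBdef, this, sub_self] at hj
            exact hj rfl
          exact min_eq_right (le_of_lt this)
        have hsplit : (∑ i, A i * M i j) = (∑ i, Z i * M i j) + ∑ i, (A i - Z i) * M i j := by
          rw [← Finset.sum_add_distrib]
          exact Finset.sum_congr rfl fun i _ => by ring
        rw [hsplit]
        have h1 := hZdot j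
        have h2 : (∑ i, (A i - Z i) * M i j) ≤ 0 := by
          apply Finset.sum_nonpos
          intro i _
          by_cases hij : i = j
          · subst hij; rw [hAZ]; simp
          · exact mul_nonpos_of_nonpos_of_nonneg
              (by simp only [hAdef, sub_nonpos]; exact min_le_right _ _) (hMoff i j hij)
        omega
      have hre : bilF n M A B = ∑ j, (∑ i, A i * M i j) * B j := by
        unfold bilF
        rw [Finset.sum_comm]
        exact Finset.sum_congr rfl fun j _ => by rw [Finset.sum_mul]
      rw [hre]
      apply Finset.sum_nonpos
      intro j _
      by_cases hj : B j = 0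
      · rw [hj]; simp
      · exact mul_nonpos_of_nonpos_of_nonneg (hcol j hj) (hB j)
    have hexp : quadForm n M Y = quadForm n M A + 2 * bilF n M A B + quadForm n M B := by
      rw [hYAB, quad_add, bil_symm n M hMsymm B A]; ring
    have hYi0 : 0 ≤ A i₀ + B i₀ := by
      have := hA i₀; have := hB i₀; omega
    rcases hQ with h | h <;> omega
  intro Y hsign hQ i
  rcases hsign with h | h
  · refine ⟨by linarith [hZpos i, h i], key Y h hQ i⟩
  · have hnegQ : quadForm n M (-Y) = -2 ∨ quadForm n M (-Y) = -3 := by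
      rw [quad_neg]; exact hQ
    have := key (-Y) (fun i => by simpa using h i) hnegQ i
    simp only [Pi.neg_apply] at this
    exact ⟨by omega, by linarith [hZpos i, h i]⟩
end
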